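/- arXiv:2405.11952 — 4 statements merged into one kernel-verified Lean document; each statement's English description precedes it below -/
import Mathlib

section
/- The principal branch of the Lambert W function satisfies W(x) = log x − log log x + o(1) as x → ∞. -/
open Real Filter

/-- The principal branch of the Lambert W function satisfies
`W(x) = log x − log log x + o(1)` as `x → ∞`. -/
theorem lambert_asymptotics (W : ℝ → ℝ)
    (hW : ∀ x : ℝ, 0 ≤ x → 0 ≤ W x ∧ W x * Real.exp (W x) = x) :
    Filter.Tendsto (fun x : ℝ => W x - (Real.log x - Real.log (Real.log x)))
      Filter.atTop (nhds 0) := by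
  have hWtop : Tendsto W atTop atTop := by
    rw [tendsto_atTop_atTop]
    intro M
    refine ⟨max 0 (M * Real.exp M), fun x hx => ?_⟩
    have hx0 : (0:ℝ) ≤ x := le_trans (le_max_left _ _) hx
    obtain ⟨h1, h2⟩ := hW x hx0
    by_contra h
    push_neg at h
    have hM : 0 < M := lt_of_le_of_lt h1 h
    have he : Real.exp (W x) < Real.exp M := Real.exp_lt_exp.2 h
    have hlt : W x * Real.exp (W x) < M * Real.exp M := by
      nlinarith [Real.exp_pos (W x), Real.exp_pos M]
    have : x < M * Real.exp M := h2 ▸ hlt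
    have : M * Real.exp M ≤ x := le_trans (le_max_right _ _) hx
    linarith
  have hev : ∀ᶠ x in atTop, W x - (Real.log x - Real.log (Real.log x))
      = Real.log (1 + Real.log (W x) / W x) := by
    filter_upwards [hWtop.eventually_ge_atTop 1, eventually_ge_atTop (0:ℝ)] with x hW1 hx0
    obtain ⟨h1, h2⟩ := hW x hx0
    have hWpos : 0 < W x := lt_of_lt_of_le one_pos hW1
    have hlogW : 0 ≤ Real.log (W x) := Real.log_nonneg hW1
    have hlogx : Real.log x = Real.log (W x) + W x := by
      conv_lhs => rw [← h2]
      rw [Real.log_mul (ne_of_gt hWpos) (Real.exp_ne_zero _), Real.log_exp]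
    have hsum : 0 < W x + Real.log (W x) := by linarith
    have hloglogx : Real.log (Real.log x) = Real.log (W x + Real.log (W x)) := by
      rw [hlogx, add_comm]
    have : 1 + Real.log (W x) / W x = (W x + Real.log (W x)) / W x := by
      field_simp
    rw [hlogx, this, Real.log_div (ne_of_gt hsum) (ne_of_gt hWpos)]
    rw [hlogx] at hloglogx
    rw [hloglogx]
    ring
  have hlim : Tendsto (fun t : ℝ => Real.log (1 + Real.log t / t)) atTop (nhds 0) := by
    have h0 : Tendsto (fun t : ℝ => Real.log t / t) atTop (nhds 0) := by
      simpa using Real.isLittleO_log_id_atTop.tendsto_div_nhds_zero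
    have h1 : Tendsto (fun t : ℝ => 1 + Real.log t / t) atTop (nhds 1) := by
      simpa using (tendsto_const_nhds.add h0 : Tendsto (fun t : ℝ => 1 + Real.log t / t) atTop (nhds (1 + 0)))
    have := (Real.continuousAt_log (by norm_num : (1:ℝ) ≠ 0)).tendsto.comp h1
    simpa [Function.comp_def] using this
  exact (hlim.comp hWtop).congr' (Filter.EventuallyEq.symm hev)
end

section
/- For each n ≥ 1 there exist real constants a_{k,n} (1 ≤ k ≤ n) with a_{n,n} = (−1)^{n−1}(n−1)! such that the n-th derivative of the Lambert W function satisfies W⁽ⁿ⁾(x) = (W(x)^{n−1}/(xⁿ(1+W(x))^{2n−1}))·Σ_{k=1}^{n} a_{k,n} W(x)^k for all x > 0, where the a_{k,n} satisfy the recursion a_{n,n} = −(n−1)·a_{n−1,n−1} with a_{1,1} = 1. -/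
open Polynomial

noncomputable def np (q : Polynomial ℝ) (n : ℝ) : Polynomial ℝ :=
  q.derivative * X ^ 1 + q.derivative * X ^ 2
    - (q * C 1 + q * C (3 * n) * X ^ 1 + q * C n * X ^ 2)

noncomputable def Qp : ℕ → Polynomial ℝ
  | 0 => X
  | (m+1) => (np (Qp m) (m+1)).divX

lemma np_coeff_one (q : Polynomial ℝ) (n : ℝ) :
    (np q n).coeff 1 = q.derivative.coeff 0 - (q.coeff 1 + 3*n*q.coeff 0) := by
  simp [np, coeff_mul_X_pow', coeff_mul_C]
  ring

lemma np_coeff_two (q : Polynomial ℝ) (n : ℝ) (k : ℕ) :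
    (np q n).coeff (k+2) = q.derivative.coeff (k+1) + q.derivative.coeff k
      - (q.coeff (k+2) + 3*n*q.coeff (k+1) + n*q.coeff k) := by
  have h1 : (k+2) - 1 = k+1 := by omega
  have h2 : (k+2) - 2 = k := by omega
  simp [np, coeff_mul_X_pow', coeff_mul_C, h1, h2, show 1 ≤ k+2 by omega, show 2 ≤ k+2 by omega]
  rw [← C_mul, coeff_mul_C]
  ring

lemma Qp_coeff_zero : ∀ m, (Qp m).coeff 0 = 0 := by
  intro m
  induction m with
  | zero => simp [Qp]
  | succ m ih =>
    rw [Qp, coeff_divX, np_coeff_one, coeff_derivative, ih]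
    ring

lemma Qp_coeff_vanish : ∀ m k, m + 1 < k → (Qp m).coeff k = 0 := by
  intro m
  induction m with
  | zero =>
    intro k hk; rw [Qp]; exact coeff_X_of_ne_one (by omega)
  | succ m ih =>
    intro k hk
    obtain ⟨j, rfl⟩ : ∃ j, k = j + 2 := ⟨k - 2, by omega⟩
    rw [Qp, coeff_divX, show j + 2 + 1 = (j+1) + 2 by omega, np_coeff_two,
      coeff_derivative, coeff_derivative, ih (j+3) (by omega), ih (j+2) (by omega),
      ih (j+1) (by omega)]
    ring

lemma Qp_natDegree_le (m : ℕ) : (Qp m).natDegree ≤ m + 1 :=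
  natDegree_le_iff_coeff_eq_zero.mpr (fun k hk => Qp_coeff_vanish m k hk)

lemma Qp_top_coeff (m : ℕ) :
    (Qp (m+1)).coeff (m+2) = -((m:ℝ)+1) * (Qp m).coeff (m+1) := by
  rw [Qp, coeff_divX, show m+2+1 = (m+1)+2 by omega, np_coeff_two,
    coeff_derivative, coeff_derivative, Qp_coeff_vanish m (m+2) (by omega),
    Qp_coeff_vanish m (m+3) (by omega)]
  push_cast
  ring

lemma Qp_eval_succ (m : ℕ) (u : ℝ) :
    (Qp (m+1)).eval u * u =
      (Qp m).derivative.eval u * u + (Qp m).derivative.eval u * u^2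
        - ((Qp m).eval u + (Qp m).eval u * (3*((m:ℝ)+1)) * u + (Qp m).eval u * ((m:ℝ)+1) * u^2) := by
  have h0 : (np (Qp m) (m+1)).coeff 0 = 0 := by
    simp [np, coeff_mul_X_pow', coeff_mul_C, mul_coeff_zero, Qp_coeff_zero]
  have h : Qp (m+1) * X = np (Qp m) ((m:ℝ)+1) := by
    have := divX_mul_X_add (np (Qp m) ((m:ℝ)+1))
    rw [h0] at this
    simpa [Qp] using this
  have := congrArg (Polynomial.eval u) h
  simpa [np, eval_mul, eval_add, eval_sub, eval_pow] using this

lemma key (W : ℝ → ℝ)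
    (hWpos : ∀ x : ℝ, 0 < x → 0 < W x)
    (hW' : ∀ x : ℝ, 0 < x → HasDerivAt W (W x / (x * (W x + 1))) x) :
    ∀ m : ℕ, ∀ x : ℝ, 0 < x →
      iteratedDeriv (m+1) W x
        = (W x)^m * (Qp m).eval (W x) / (x^(m+1) * (1 + W x)^(2*m+1)) := by
  intro m
  induction m with
  | zero =>
    intro x hx
    have hu := hWpos x hx
    rw [iteratedDeriv_one, (hW' x hx).deriv]
    simp [Qp]
    rw [div_eq_div_iff (by positivity) (by positivity)]
    ring
  | succ m ih =>
    intro x hx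
    have hev : iteratedDeriv (m+1) W =ᶠ[nhds x]
        (fun y => (W y)^m * (Qp m).eval (W y) / (y^(m+1) * (1 + W y)^(2*m+1))) := by
      filter_upwards [isOpen_Ioi.mem_nhds (show x ∈ Set.Ioi (0:ℝ) from hx)] with y hy
      exact ih y hy
    have hu := hWpos x hx
    have h1u : (0:ℝ) < 1 + W x := by linarith
    have hdW := hW' x hx
    have hA : HasDerivAt (fun y => (W y)^m)
        ((m:ℝ) * (W x)^(m-1) * (W x / (x * (W x + 1)))) x := hdW.pow m
    have hQ : HasDerivAt (fun y => (Qp m).eval (W y))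
        ((Qp m).derivative.eval (W x) * (W x / (x * (W x + 1)))) x := by
      exact ((Qp m).hasDerivAt (W x)).comp x hdW
    have hN : HasDerivAt (fun y => (W y)^m * (Qp m).eval (W y))
        ((m:ℝ) * (W x)^(m-1) * (W x / (x * (W x + 1))) * (Qp m).eval (W x)
          + (W x)^m * ((Qp m).derivative.eval (W x) * (W x / (x * (W x + 1))))) x :=
      hA.mul hQ
    have hD1 : HasDerivAt (fun y : ℝ => y^(m+1)) ((↑(m+1)) * x^m) x := by
      simpa using hasDerivAt_pow (m+1) x
    have hD2 : HasDerivAt (fun y => (1 + W y)^(2*m+1))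
        ((↑(2*m+1)) * (1 + W x)^(2*m) * (W x / (x * (W x + 1)))) x := by
      simpa using (show HasDerivAt (fun y => (1 + W y)^(2*m+1)) _ x from
        ((hasDerivAt_const x (1:ℝ)).add hdW).pow (2*m+1))
    have hD : HasDerivAt (fun y => y^(m+1) * (1 + W y)^(2*m+1))
        ((↑(m+1)) * x^m * (1 + W x)^(2*m+1)
          + x^(m+1) * ((↑(2*m+1)) * (1 + W x)^(2*m) * (W x / (x * (W x + 1))))) x :=
      hD1.mul hD2
    have hD0 : x^(m+1) * (1 + W x)^(2*m+1) ≠ 0 := by positivity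
    have hGd := (hN.fun_div hD hD0).deriv
    rw [iteratedDeriv_succ, hev.deriv_eq, hGd]
    have hpow2 : ∀ c : ℝ, (m:ℝ) * (W x)^(m-1) * (W x / c) = (m:ℝ) * (W x)^m / c := by
      intro c
      cases m with
      | zero => simp
      | succ k => simp only [Nat.add_sub_cancel]; rw [pow_succ]; ring
    rw [hpow2]
    rw [div_eq_div_iff (by positivity) (by positivity)]
    have hPoly := Qp_eval_succ m (W x)
    have hux : W x ≠ 0 := ne_of_gt hu
    have h1ux : (1:ℝ) + W x ≠ 0 := ne_of_gt h1u
    have h1ux' : W x + 1 ≠ 0 := by linarith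
    have hx0 : x ≠ 0 := ne_of_gt hx
    set A := (Qp m).eval (W x)
    set B := (Qp m).derivative.eval (W x)
    trans ((W x)^m * (B * (W x) + B * (W x)^2
        - (A + A * (3*((m:ℝ)+1)) * (W x) + A * ((m:ℝ)+1) * (W x)^2))
        * (x^(m+1) * (1 + W x)^(2*m+1))^2)
    · field_simp
      push_cast
      ring
    · linear_combination (-((W x)^m * (x^(m+1) * (1 + W x)^(2*m+1))^2)) * hPoly

/-- For each `n ≥ 1` there are real constants `a_{k,n}` (`1 ≤ k ≤ n`) with
`a_{1,1} = 1`, `a_{n,n} = −(n−1)·a_{n−1,n−1}`, hence `a_{n,n} = (−1)^{n−1}(n−1)!`, such that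
`W⁽ⁿ⁾(x) = (W(x)^{n−1}/(xⁿ(1+W(x))^{2n−1}))·Σ_{k=1}^{n} a_{k,n} W(x)^k` for all `x > 0`.
Here `W` is the principal branch of the Lambert W function, characterized by its functional
equation and its first derivative formula. -/
theorem lambert_iterated_derivative_formula (W : ℝ → ℝ)
    (hW : ∀ x : ℝ, 0 ≤ x → 0 ≤ W x ∧ W x * Real.exp (W x) = x)
    (hW' : ∀ x : ℝ, 0 < x → HasDerivAt W (W x / (x * (W x + 1))) x) :
    ∃ a : ℕ → ℕ → ℝ,
      a 1 1 = 1 ∧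
      (∀ n : ℕ, 2 ≤ n → a n n = -((n : ℝ) - 1) * a (n-1) (n-1)) ∧
      (∀ n : ℕ, 1 ≤ n → a n n = (-1 : ℝ) ^ (n-1) * (Nat.factorial (n-1) : ℝ)) ∧
      ∀ n : ℕ, 1 ≤ n → ∀ x : ℝ, 0 < x →
        iteratedDeriv n W x =
          (W x) ^ (n-1) / (x ^ n * (1 + W x) ^ (2*n - 1)) *
            ∑ k ∈ Finset.Icc 1 n, a k n * (W x) ^ k := by
  have hWpos : ∀ x : ℝ, 0 < x → 0 < W x := by
    intro x hx
    obtain ⟨h0, heq⟩ := hW x hx.le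
    rcases h0.lt_or_eq with h | h
    · exact h
    · exfalso
      rw [← h] at heq
      simp at heq
      linarith
  refine ⟨fun k n => (Qp (n-1)).coeff k, ?_, ?_, ?_, ?_⟩
  · simp [Qp]
  · intro n hn
    obtain ⟨m, rfl⟩ : ∃ m, n = m + 2 := ⟨n - 2, by omega⟩
    show (Qp (m+2-1)).coeff (m+2) = -((((m+2 : ℕ)):ℝ) - 1) * (Qp (m+2-1-1)).coeff (m+2-1)
    simp only [show m+2-1 = m+1 from by omega, show m+1-1 = m from by omega]
    rw [Qp_top_coeff m]
    push_cast
    ring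
  · intro n hn
    induction n with
    | zero => omega
    | succ n ihn =>
      rcases Nat.lt_or_ge n 1 with h | h
      · obtain rfl : n = 0 := by omega
        show (Qp (1-1)).coeff 1 = _
        simp [Qp]
      · have := ihn h
        simp only at this
        obtain ⟨m, rfl⟩ : ∃ m, n = m + 1 := ⟨n - 1, by omega⟩
        show (Qp (m+1+1-1)).coeff (m+1+1) = (-1:ℝ)^(m+1+1-1) * (Nat.factorial (m+1+1-1) : ℝ)
        rw [show m+1+1-1 = m+1 from by omega, show m+1+1 = m+2 from by omega, Qp_top_coeff m]
        simp only [show m+1-1 = m from by omega] at this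
        rw [this, Nat.factorial_succ]
        push_cast
        ring
  · intro n hn x hx
    obtain ⟨m, rfl⟩ : ∃ m, n = m + 1 := ⟨n - 1, by omega⟩
    have hu := hWpos x hx
    have h1u : (0:ℝ) < 1 + W x := by linarith
    have hsum : ∑ k ∈ Finset.Icc 1 (m+1), (Qp (m+1-1)).coeff k * (W x)^k
        = (Qp m).eval (W x) := by
      simp only [Nat.add_sub_cancel]
      rw [Polynomial.eval_eq_sum_range' (n := m+2) (lt_of_le_of_lt (Qp_natDegree_le m) (by omega)) (W x)]
      have : Finset.range (m+2) = insert 0 (Finset.Icc 1 (m+1)) := by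
        ext i; simp [Finset.mem_range, Finset.mem_Icc]; omega
      rw [this, Finset.sum_insert (by simp), Qp_coeff_zero]
      simp
    beta_reduce
    rw [hsum, key W hWpos hW' m x hx,
      show m + 1 - 1 = m from rfl, show 2*(m+1) - 1 = 2*m+1 by omega]
    ring
end

section
/- As x → ∞, the n-th derivative of the Lambert W function satisfies W⁽ⁿ⁾(x) = ((−1)^{n−1}(n−1)!/xⁿ)·(1 + O(1/log x)), matching the asymptotics of d^n(log x)/dx^n = (−1)^{n−1}(n−1)!/xⁿ. -/
open Polynomial

noncomputable def Pw : ℕ → Polynomial ℝ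
  | 0 => X
  | (m+1) => derivative (Pw m) * (X * (X + 1)) - C ((m:ℝ)+1) * (Pw m * (X + 1)^2)
      - C (2*(m:ℝ)+1) * (Pw m * X)

lemma natDegree_X_add_one : (X + 1 : Polynomial ℝ).natDegree = 1 := by
  simpa using natDegree_X_add_C (1:ℝ)

lemma natDegree_Pw : ∀ m : ℕ, (Pw m).natDegree ≤ 2*m+1 := by
  intro m
  induction m with
  | zero => simp [Pw]
  | succ m ih =>
    rw [Pw]
    refine le_trans (natDegree_sub_le _ _)
      (max_le (le_trans (natDegree_sub_le _ _) (max_le ?_ ?_)) ?_)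
    · refine le_trans (natDegree_mul_le) ?_
      have h1 : (derivative (Pw m)).natDegree ≤ 2*m :=
        le_trans (natDegree_derivative_le _) (by omega)
      have h2 : (X * (X+1) : Polynomial ℝ).natDegree ≤ 2 := by
        refine le_trans natDegree_mul_le ?_
        simp [natDegree_X_add_one]
      omega
    · refine le_trans (natDegree_C_mul_le _ _) ?_
      refine le_trans natDegree_mul_le ?_
      have : ((X+1 : Polynomial ℝ)^2).natDegree ≤ 2 := by
        refine le_trans natDegree_pow_le ?_
        simp [natDegree_X_add_one]
      omega
    · refine le_trans (natDegree_C_mul_le _ _) ?_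
      refine le_trans natDegree_mul_le ?_
      simp; omega

lemma coeff_Pw : ∀ m : ℕ, (Pw m).coeff (2*m+1) = (-1:ℝ)^m * (Nat.factorial m) := by
  intro m
  induction m with
  | zero => simp [Pw]
  | succ m ih =>
    rw [Pw]
    have hd : (derivative (Pw m) * (X * (X+1))).coeff (2*(m+1)+1) = 0 := by
      apply coeff_eq_zero_of_natDegree_lt
      have h1 : (derivative (Pw m)).natDegree ≤ 2*m :=
        le_trans (natDegree_derivative_le _) (by have := natDegree_Pw m; omega)
      have h2 : (X * (X+1) : Polynomial ℝ).natDegree ≤ 2 := by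
        refine le_trans natDegree_mul_le ?_; simp [natDegree_X_add_one]
      have := natDegree_mul_le (p := derivative (Pw m)) (q := (X * (X+1) : Polynomial ℝ))
      omega
    have h3 : ((Pw m) * X).coeff (2*(m+1)+1) = 0 := by
      apply coeff_eq_zero_of_natDegree_lt
      have := natDegree_mul_le (p := Pw m) (q := (X : Polynomial ℝ))
      have := natDegree_Pw m
      simp only [natDegree_X] at *
      omega
    have h2 : ((Pw m) * (X+1)^2).coeff (2*(m+1)+1) = (-1:ℝ)^m * (Nat.factorial m) := by
      have hexp : (Pw m) * (X+1)^2 = Pw m * X^2 + 2 * (Pw m * X) + Pw m := by ring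
      have e1 : ((Pw m) * X^2).coeff (2*(m+1)+1) = (Pw m).coeff (2*m+1) := by
        have : 2*(m+1)+1 = (2*m+1) + 2 := by omega
        rw [this, coeff_mul_X_pow]
      have e2 : ((Pw m) * X).coeff (2*(m+1)+1) = 0 := by
        apply coeff_eq_zero_of_natDegree_lt
        have := natDegree_mul_le (p := Pw m) (q := (X : Polynomial ℝ))
        have := natDegree_Pw m
        simp only [natDegree_X] at *
        omega
      have e3 : (Pw m).coeff (2*(m+1)+1) = 0 := by
        apply coeff_eq_zero_of_natDegree_lt
        have := natDegree_Pw m; omega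
      rw [hexp]
      simp only [coeff_add, e2, e3, coeff_ofNat_mul]
      rw [e1, ih]; ring
    rw [coeff_sub, coeff_sub, hd, coeff_C_mul, coeff_C_mul, h2, h3]
    rw [Nat.factorial_succ]
    push_cast
    ring

noncomputable def Rw (m : ℕ) : Polynomial ℝ :=
  Pw m - C ((-1:ℝ)^m * (Nat.factorial m)) * (X + 1)^(2*m+1)

lemma natDegree_Rw (m : ℕ) : (Rw m).natDegree ≤ 2*m := by
  rw [natDegree_le_iff_coeff_eq_zero]
  intro k hk
  rw [Rw, coeff_sub, coeff_C_mul, coeff_X_add_one_pow]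
  rcases eq_or_lt_of_le (Nat.succ_le_of_lt hk) with h | h
  · rw [← h, coeff_Pw, Nat.choose_self]; ring
  · rw [coeff_eq_zero_of_natDegree_lt (lt_of_le_of_lt (natDegree_Pw m) h),
      Nat.choose_eq_zero_of_lt h]
    ring

lemma eval_abs_le (p : Polynomial ℝ) (d : ℕ) (hd : p.natDegree ≤ d) (w : ℝ) (hw : 1 ≤ w) :
    |p.eval w| ≤ (∑ i ∈ Finset.range (d+1), |p.coeff i|) * w^d := by
  rw [eval_eq_sum_range' (lt_of_le_of_lt hd (Nat.lt_succ_self d)), Finset.sum_mul]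
  refine le_trans (Finset.abs_sum_le_sum_abs _ _) (Finset.sum_le_sum ?_)
  intro i hi
  rw [abs_mul]
  have h0 : (0:ℝ) ≤ w := le_trans zero_le_one hw
  have hwp : |w^i| ≤ w^d := by
    rw [abs_pow, abs_of_nonneg h0]
    exact pow_le_pow_right₀ hw (by simpa using Nat.lt_succ_iff.mp (Finset.mem_range.mp hi))
  exact mul_le_mul_of_nonneg_left hwp (abs_nonneg _)

lemma logpart : ∀ m : ℕ, ∀ x : ℝ, 0 < x →
    iteratedDeriv (m+1) Real.log x = (-1 : ℝ) ^ m * (Nat.factorial m : ℝ) / x ^ (m+1) := by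
  intro m
  induction m with
  | zero =>
    intro x hx
    rw [iteratedDeriv_one, Real.deriv_log]
    norm_num
  | succ m ih =>
    intro x hx
    rw [iteratedDeriv_succ]
    have hev : iteratedDeriv (m+1) Real.log =ᶠ[nhds x]
        fun y => (-1 : ℝ) ^ m * (Nat.factorial m : ℝ) / y ^ (m+1) := by
      filter_upwards [IsOpen.mem_nhds isOpen_Ioi hx] with y hy
      exact ih y hy
    rw [hev.deriv_eq]
    have hd : HasDerivAt (fun y : ℝ => (-1 : ℝ) ^ m * (Nat.factorial m : ℝ) / y ^ (m+1))
        ((0 * x^(m+1) - ((-1 : ℝ) ^ m * (Nat.factorial m : ℝ)) * ((m+1) * x^m)) / (x^(m+1))^2) x := by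
      exact (hasDerivAt_const x _).div (by simpa using hasDerivAt_pow (m+1) x)
        (pow_ne_zero _ hx.ne')
    rw [hd.deriv]
    have hx' : x ≠ 0 := hx.ne'
    rw [Nat.factorial_succ]
    push_cast
    field_simp
    ring

lemma hasDerivAt_formula (W : ℝ → ℝ)
    (hW : ∀ x : ℝ, 0 ≤ x → 0 ≤ W x ∧ W x * Real.exp (W x) = x)
    (hW' : ∀ x : ℝ, 0 < x → HasDerivAt W (W x / (x * (W x + 1))) x)
    (m : ℕ) (x : ℝ) (hx : 0 < x) :
    HasDerivAt (fun y => (Pw m).eval (W y) / (y^(m+1) * (1 + W y)^(2*m+1)))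
      ((Pw (m+1)).eval (W x) / (x^(m+2) * (1 + W x)^(2*m+3))) x := by
  have hWx := hW' x hx
  have h0 : 0 ≤ W x := (hW x hx.le).1
  have h1 : (1:ℝ) + W x ≠ 0 := by positivity
  have hxne : x ≠ 0 := hx.ne'
  have hnum : HasDerivAt (fun y => (Pw m).eval (W y))
      ((derivative (Pw m)).eval (W x) * (W x / (x * (W x + 1)))) x :=
    (Polynomial.hasDerivAt (Pw m) (W x)).comp x hWx
  have hpow : HasDerivAt (fun y : ℝ => y^(m+1)) ((m+1 : ℕ) * x^m) x := by
    simpa using hasDerivAt_pow (m+1) x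
  have h1W : HasDerivAt (fun y => (1 + W y)^(2*m+1))
      ((2*m+1 : ℕ) * (1 + W x)^(2*m) * (W x / (x * (W x + 1)))) x := by
    simpa using (hWx.const_add 1).fun_pow (2*m+1)
  have hden : HasDerivAt (fun y => y^(m+1) * (1 + W y)^(2*m+1))
      (((m+1 : ℕ) * x^m) * (1 + W x)^(2*m+1)
        + x^(m+1) * ((2*m+1 : ℕ) * (1 + W x)^(2*m) * (W x / (x * (W x + 1))))) x :=
    hpow.mul h1W
  have hdne : x^(m+1) * (1 + W x)^(2*m+1) ≠ 0 := by positivity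
  have := hnum.fun_div hden hdne
  refine this.congr_deriv ?_
  have hW1 : W x + 1 ≠ 0 := by positivity
  rw [Pw]
  simp only [eval_sub, eval_mul, eval_add, eval_pow, eval_X, eval_one, eval_C]
  push_cast
  field_simp
  ring

lemma iteratedDeriv_W (W : ℝ → ℝ)
    (hW : ∀ x : ℝ, 0 ≤ x → 0 ≤ W x ∧ W x * Real.exp (W x) = x)
    (hW' : ∀ x : ℝ, 0 < x → HasDerivAt W (W x / (x * (W x + 1))) x) :
    ∀ m : ℕ, ∀ x : ℝ, 0 < x →
      iteratedDeriv (m+1) W x = (Pw m).eval (W x) / (x^(m+1) * (1 + W x)^(2*m+1)) := by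
  intro m
  induction m with
  | zero =>
    intro x hx
    rw [iteratedDeriv_one, (hW' x hx).deriv, Pw]
    rw [eval_X, pow_one, pow_one]
    ring_nf
  | succ m ih =>
    intro x hx
    rw [iteratedDeriv_succ]
    have hev : iteratedDeriv (m+1) W =ᶠ[nhds x]
        fun y => (Pw m).eval (W y) / (y^(m+1) * (1 + W y)^(2*m+1)) := by
      filter_upwards [IsOpen.mem_nhds isOpen_Ioi hx] with y hy
      exact ih y hy
    rw [hev.deriv_eq, (hasDerivAt_formula W hW hW' m x hx).deriv]
    ring_nf

lemma W_lower (W : ℝ → ℝ)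
    (hW : ∀ x : ℝ, 0 ≤ x → 0 ≤ W x ∧ W x * Real.exp (W x) = x)
    (x : ℝ) (hx : 0 < x) : Real.log x ≤ 2 * W x := by
  obtain ⟨h0, heq⟩ := hW x hx.le
  have h1 : x ≤ Real.exp (2 * W x) := by
    rw [two_mul, Real.exp_add]
    calc x = W x * Real.exp (W x) := heq.symm
      _ ≤ Real.exp (W x) * Real.exp (W x) := by
          apply mul_le_mul_of_nonneg_right _ (Real.exp_pos _).le
          exact le_trans (by linarith) (Real.add_one_le_exp (W x))
  calc Real.log x ≤ Real.log (Real.exp (2 * W x)) := Real.log_le_log hx h1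
    _ = 2 * W x := Real.log_exp _

/-- For fixed `n ≥ 1`, the `n`-th derivative of the Lambert W function satisfies
`W⁽ⁿ⁾(x) = ((−1)^{n−1}(n−1)!/xⁿ)·(1 + O(1/log x))` as `x → ∞`, matching the asymptotics
of `dⁿ(log x)/dxⁿ = (−1)^{n−1}(n−1)!/xⁿ`. -/
theorem lambert_iterated_derivative_asymptotics (W : ℝ → ℝ) (n : ℕ) (hn : 1 ≤ n)
    (hW : ∀ x : ℝ, 0 ≤ x → 0 ≤ W x ∧ W x * Real.exp (W x) = x)
    (hW' : ∀ x : ℝ, 0 < x → HasDerivAt W (W x / (x * (W x + 1))) x) :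
    (∀ x : ℝ, 0 < x →
      iteratedDeriv n Real.log x = (-1 : ℝ) ^ (n-1) * (Nat.factorial (n-1) : ℝ) / x ^ n) ∧
    ∃ C > (0:ℝ), ∃ x₀ : ℝ, ∀ x : ℝ, x₀ ≤ x →
      |iteratedDeriv n W x - (-1 : ℝ) ^ (n-1) * (Nat.factorial (n-1) : ℝ) / x ^ n| ≤
        C * ((Nat.factorial (n-1) : ℝ) / x ^ n) / Real.log x := by
  obtain ⟨m, rfl⟩ : ∃ m, n = m + 1 := ⟨n - 1, by omega⟩
  simp only [Nat.add_sub_cancel]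
  constructor
  · exact logpart m
  · set S : ℝ := ∑ i ∈ Finset.range (2*m+1), |(Rw m).coeff i| with hS
    have hS0 : 0 ≤ S := Finset.sum_nonneg fun i _ => abs_nonneg _
    have hfac : (0:ℝ) < (Nat.factorial m : ℝ) := by positivity
    refine ⟨(2*S + (Nat.factorial m : ℝ)) / (Nat.factorial m : ℝ), by positivity,
      Real.exp 2, ?_⟩
    intro x hx
    have hx0 : (0:ℝ) < x := lt_of_lt_of_le (Real.exp_pos 2) hx
    have hlog : 2 ≤ Real.log x := (Real.le_log_iff_exp_le hx0).mpr hx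
    have hlog0 : 0 < Real.log x := by linarith
    have hw1 : 1 ≤ W x := by
      have := W_lower W hW x hx0
      linarith
    have hw0 : (0:ℝ) < W x := by linarith
    set w := W x
    have h1w : (0:ℝ) < 1 + w := by linarith
    have hxne : x ≠ 0 := hx0.ne'
    -- key identity
    have key : iteratedDeriv (m+1) W x
        - (-1 : ℝ) ^ m * (Nat.factorial m : ℝ) / x ^ (m+1)
        = (Rw m).eval w / (x^(m+1) * (1 + w)^(2*m+1)) := by
      rw [iteratedDeriv_W W hW hW' m x hx0, Rw]
      rw [show W x = w from rfl]
      simp only [eval_sub, eval_mul, eval_pow, eval_add, eval_X, eval_one, eval_C]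
      field_simp
      ring
    rw [key]
    have hD : (0:ℝ) < x^(m+1) * (1 + w)^(2*m+1) := by positivity
    rw [abs_div, abs_of_pos hD]
    -- step 1: numerator bound
    have h1 : |(Rw m).eval w| ≤ S * w^(2*m) := by
      simpa [hS] using eval_abs_le (Rw m) (2*m) (natDegree_Rw m) w hw1
    -- step 2: denominator bound
    have h2 : x^(m+1) * (w^(2*m) * w) ≤ x^(m+1) * (1 + w)^(2*m+1) := by
      have : w^(2*m+1) ≤ (1+w)^(2*m+1) :=
        pow_le_pow_left₀ hw0.le (by linarith) _
      calc x^(m+1) * (w^(2*m) * w) = x^(m+1) * w^(2*m+1) := by ring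
        _ ≤ x^(m+1) * (1+w)^(2*m+1) := by
            exact mul_le_mul_of_nonneg_left this (by positivity)
    have hstep : |(Rw m).eval w| / (x^(m+1) * (1 + w)^(2*m+1))
        ≤ S * w^(2*m) / (x^(m+1) * (w^(2*m) * w)) := by
      apply div_le_div₀ (by positivity) h1 (by positivity) h2
    have heq2 : S * w^(2*m) / (x^(m+1) * (w^(2*m) * w)) = S / (x^(m+1) * w) := by
      field_simp
    have hstep2 : S / (x^(m+1) * w) ≤ S / (x^(m+1) * (Real.log x / 2)) := by
      apply div_le_div_of_nonneg_left hS0 (by positivity)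
      have : Real.log x ≤ 2 * w := W_lower W hW x hx0
      have hx1 : (0:ℝ) < x^(m+1) := by positivity
      nlinarith
    have hfin : S / (x^(m+1) * (Real.log x / 2))
        ≤ (2*S + (Nat.factorial m : ℝ)) / (Nat.factorial m : ℝ)
          * ((Nat.factorial m : ℝ) / x ^ (m+1)) / Real.log x := by
      have hrhs : (2*S + (Nat.factorial m : ℝ)) / (Nat.factorial m : ℝ)
          * ((Nat.factorial m : ℝ) / x ^ (m+1)) / Real.log x
          = (2*S + (Nat.factorial m : ℝ)) / (x^(m+1) * Real.log x) := by
        field_simp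
      have hlhs : S / (x^(m+1) * (Real.log x / 2)) = 2*S / (x^(m+1) * Real.log x) := by
        field_simp
      rw [hrhs, hlhs]
      gcongr
      linarith
    calc |(Rw m).eval w| / (x^(m+1) * (1 + w)^(2*m+1))
        ≤ S * w^(2*m) / (x^(m+1) * (w^(2*m) * w)) := hstep
      _ = S / (x^(m+1) * w) := heq2
      _ ≤ S / (x^(m+1) * (Real.log x / 2)) := hstep2
      _ ≤ _ := hfin
end

section
/- For n ≥ 2 and β = −1, the momentum profile φ(τ) = 2(1 + τ + (n−1)(1+τ)^{1−n} − n(1+τ)^{2−n}) satisfies φ(0) = 0, φ'(0) = 0, and φ(τ) > 0 for all τ > 0. -/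
/-- For `n ≥ 2`, the higher-dimensional Hwang–Singer momentum profile
`φ(τ) = 2(1 + τ + (n−1)(1+τ)^{1−n} − n(1+τ)^{2−n})` satisfies `φ(0) = 0`, `φ'(0) = 0`, and
`φ(τ) > 0` for all `τ > 0`. -/
theorem higher_dim_momentum_profile (n : ℕ) (hn : 2 ≤ n) :
    let φ : ℝ → ℝ := fun τ =>
      2 * (1 + τ + ((n : ℝ) - 1) * (1 + τ) ^ ((1 : ℤ) - n) - (n : ℝ) * (1 + τ) ^ ((2 : ℤ) - n))
    φ 0 = 0 ∧ deriv φ 0 = 0 ∧ ∀ τ : ℝ, 0 < τ → 0 < φ τ := by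
  intro φ
  have hn' : (2:ℝ) ≤ n := by exact_mod_cast hn
  refine ⟨?_, ?_, ?_⟩
  · show (2:ℝ) * (1 + 0 + ((n : ℝ) - 1) * (1 + 0) ^ ((1 : ℤ) - n) - (n : ℝ) * (1 + 0) ^ ((2 : ℤ) - n)) = 0
    simp
  · have hg : HasDerivAt (fun τ : ℝ => 1 + τ) 1 0 := by
      simpa using (hasDerivAt_id (0:ℝ)).const_add 1
    have h1 : HasDerivAt (fun τ : ℝ => (1 + τ) ^ ((1 : ℤ) - n))
        ((((1:ℤ) - n : ℤ) : ℝ)) 0 := by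
      have := (hasDerivAt_zpow ((1:ℤ) - n) ((1:ℝ) + 0) (Or.inl (by norm_num))).comp 0 hg
      simpa [Function.comp_def] using this
    have h2 : HasDerivAt (fun τ : ℝ => (1 + τ) ^ ((2 : ℤ) - n))
        ((((2:ℤ) - n : ℤ) : ℝ)) 0 := by
      have := (hasDerivAt_zpow ((2:ℤ) - n) ((1:ℝ) + 0) (Or.inl (by norm_num))).comp 0 hg
      simpa [Function.comp_def] using this
    have hφ : HasDerivAt φ
        (2 * (1 + ((n:ℝ) - 1) * (((1:ℤ) - n : ℤ) : ℝ) - (n:ℝ) * (((2:ℤ) - n : ℤ) : ℝ))) 0 := by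
      exact ((hg.add (h1.const_mul ((n:ℝ) - 1))).sub (h2.const_mul (n:ℝ))).const_mul 2
    rw [hφ.deriv]
    push_cast
    ring
  · intro τ hτ
    have hx : (0:ℝ) < 1 + τ := by linarith
    have hxne : (1 + τ : ℝ) ≠ 0 := hx.ne'
    have e1 : (1 + τ) ^ ((1 : ℤ) - n) = (1 + τ) / (1 + τ) ^ n := by
      rw [zpow_sub₀ hxne, zpow_one, zpow_natCast]
    have e2 : (1 + τ) ^ ((2 : ℤ) - n) = (1 + τ) ^ 2 / (1 + τ) ^ n := by
      rw [zpow_sub₀ hxne, zpow_natCast, show ((2:ℤ)) = ((2:ℕ):ℤ) from rfl, zpow_natCast]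
    have hpow : (0:ℝ) < (1 + τ) ^ n := pow_pos hx n
    have hval : φ τ = 2 * ((1 + τ) * ((1 + τ) ^ n + ((n:ℝ) - 1) - n * (1 + τ))) / (1 + τ) ^ n := by
      show (2:ℝ) * (1 + τ + ((n : ℝ) - 1) * (1 + τ) ^ ((1 : ℤ) - n)
          - (n : ℝ) * (1 + τ) ^ ((2 : ℤ) - n)) = _
      rw [e1, e2]
      field_simp
    rw [hval]
    apply div_pos _ hpow
    have hB : (1 : ℝ) + (n - 2 : ℕ) * τ ≤ (1 + τ) ^ (n - 2) :=
      one_add_mul_le_pow (by linarith) (n - 2)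
    have hsplit : (1 + τ) ^ n = (1 + τ) ^ 2 * (1 + τ) ^ (n - 2) := by
      rw [← pow_add]; congr 1; omega
    have hcast : ((n - 2 : ℕ) : ℝ) = (n : ℝ) - 2 := by
      push_cast [Nat.cast_sub hn]; ring
    rw [hcast] at hB
    have hmul : (1 + τ) ^ 2 * (1 + ((n:ℝ) - 2) * τ) ≤ (1 + τ) ^ 2 * (1 + τ) ^ (n - 2) :=
      mul_le_mul_of_nonneg_left hB (le_of_lt (pow_pos hx 2))
    have key : 1 + (n:ℝ) * τ < (1 + τ) ^ n := by
      rw [hsplit]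
      nlinarith [mul_pos hτ hτ, mul_nonneg (mul_nonneg (sub_nonneg.2 hn') hτ.le) hτ.le,
        mul_nonneg (mul_nonneg (mul_nonneg (sub_nonneg.2 hn') hτ.le) hτ.le) hτ.le]
    have : (0:ℝ) < (1 + τ) ^ n + ((n:ℝ) - 1) - n * (1 + τ) := by nlinarith
    positivity
end
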